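/- Let Φ : M_d(ℂ) → M_s(ℂ) ⊗ M_d(ℂ) be a completely positive trace-preserving map and σ a full-rank density matrix. Suppose σ = ⊕_{α} λ_α σ_α is block diagonal with respect to orthogonal projections Π_α summing to the identity, and Φ(Π_α X Π_α) ∈ M_s(ℂ) ⊗ Π_α M_d(ℂ) Π_α for all α and X. Then the generated state ρ_R = tr_M(Φ^{n}(σ)) decomposes as ρ_R = Σ_α λ_α tr_M(Φ^{n}(σ_α)) for every n ≥ 1. -/

import Mathlib

open Matrix
open scoped ComplexOrder Kronecker

/-- The tensor extension `id_T ⊗ Φ` of a generating map `Φ : M_D → M_S ⊗ M_D`,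
acting on the memory (second) factor. -/
def idTensorGen {T S D : Type*} (Φ : Matrix D D ℂ → Matrix (S × D) (S × D) ℂ)
    (M : Matrix (T × D) (T × D) ℂ) : Matrix (T × (S × D)) (T × (S × D)) ℂ :=
  fun p q => Φ (fun x y => M (p.1, x) (q.1, y)) p.2 q.2

/-- Relabelling `(Fin n → S) × (S × D) ≃ (Fin (n+1) → S) × D`. -/
def spinEquiv (S D : Type*) (n : ℕ) : ((Fin n → S) × (S × D)) ≃ ((Fin (n + 1) → S) × D) :=
  ((Equiv.prodAssoc (Fin n → S) S D).symm.trans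
    ((Equiv.prodComm (Fin n → S) S).prodCongr (Equiv.refl D))).trans
    ((Fin.consEquiv (fun _ : Fin (n + 1) => S)).prodCongr (Equiv.refl D))

/-- The `n`-fold composition `Φⁿ = (id_{s^{n−1}} ⊗ Φ) ∘ Φ^{n−1}` generating `n` spins. -/
def phiIter {S D : Type*} (Φ : Matrix D D ℂ → Matrix (S × D) (S × D) ℂ) :
    (n : ℕ) → Matrix D D ℂ → Matrix ((Fin n → S) × D) ((Fin n → S) × D) ℂ
  | 0, X => fun p q => X p.2 q.2
  | n + 1, X =>
      Matrix.reindex (spinEquiv S D n) (spinEquiv S D n) (idTensorGen Φ (phiIter Φ n X))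

/-- Partial trace over the memory (second) factor. -/
noncomputable def ptraceM {T D : Type*} [Fintype D]
    (M : Matrix (T × D) (T × D) ℂ) : Matrix T T ℂ :=
  fun t t' => ∑ x : D, M (t, x) (t', x)


-- Auxiliary lemmas

lemma idTensorGen_smul {T S D : Type*} (Φ : Matrix D D ℂ →ₗ[ℂ] Matrix (S × D) (S × D) ℂ)
    (c : ℂ) (M : Matrix (T × D) (T × D) ℂ) :
    idTensorGen (⇑Φ) (c • M) = c • idTensorGen (⇑Φ) M := by
  funext p q
  have h : (fun x y => (c • M) (p.1, x) (q.1, y)) = c • (fun x y => M (p.1, x) (q.1, y)) := by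
    funext x y; simp [Matrix.smul_apply]
  show Φ (fun x y => (c • M) (p.1, x) (q.1, y)) p.2 q.2 = (c • idTensorGen (⇑Φ) M) p q
  rw [h]; exact congrFun (congrFun (Φ.map_smul c _) p.2) q.2

lemma idTensorGen_sum {T S D ι : Type*} (s : Finset ι)
    (Φ : Matrix D D ℂ →ₗ[ℂ] Matrix (S × D) (S × D) ℂ)
    (f : ι → Matrix (T × D) (T × D) ℂ) :
    idTensorGen (⇑Φ) (∑ α ∈ s, f α) = ∑ α ∈ s, idTensorGen (⇑Φ) (f α) := by
  funext p q
  have h : (fun x y => (∑ α ∈ s, f α) (p.1, x) (q.1, y))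
      = ∑ α ∈ s, (fun x y => f α (p.1, x) (q.1, y)) := by
    funext x y; simp [Matrix.sum_apply]
  show Φ (fun x y => (∑ α ∈ s, f α) (p.1, x) (q.1, y)) p.2 q.2
      = (∑ α ∈ s, idTensorGen (⇑Φ) (f α)) p q
  rw [h]
  refine (congrFun (congrFun (map_sum Φ (fun α => (fun x y => f α (p.1, x) (q.1, y) : Matrix D D ℂ)) s) p.2) q.2).trans ?_
  simp [Matrix.sum_apply, idTensorGen]; rfl

lemma phiIter_smul {S D : Type*} (Φ : Matrix D D ℂ →ₗ[ℂ] Matrix (S × D) (S × D) ℂ)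
    (n : ℕ) (c : ℂ) (X : Matrix D D ℂ) :
    phiIter (⇑Φ) n (c • X) = c • phiIter (⇑Φ) n X := by
  induction n with
  | zero => funext p q; simp [phiIter, Matrix.smul_apply]; rfl
  | succ n ih =>
    funext p q
    simp [phiIter, ih, idTensorGen_smul, Matrix.smul_apply]

lemma phiIter_sum {S D ι : Type*} (s : Finset ι)
    (Φ : Matrix D D ℂ →ₗ[ℂ] Matrix (S × D) (S × D) ℂ)
    (n : ℕ) (f : ι → Matrix D D ℂ) :
    phiIter (⇑Φ) n (∑ α ∈ s, f α) = ∑ α ∈ s, phiIter (⇑Φ) n (f α) := by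
  induction n with
  | zero => funext p q; simp [phiIter, Matrix.sum_apply]; exact (Matrix.sum_apply (α := ℂ) p q s (fun α => (fun p q => f α p.2 q.2 : Matrix ((Fin 0 → S) × D) ((Fin 0 → S) × D) ℂ))).symm
  | succ n ih =>
    funext p q
    simp [phiIter, ih, idTensorGen_sum, Matrix.sum_apply]

lemma ptraceM_smul {T D : Type*} [Fintype D] (c : ℂ) (M : Matrix (T × D) (T × D) ℂ) :
    ptraceM (c • M) = c • ptraceM M := by
  funext t t'
  simp only [ptraceM, Matrix.smul_apply, smul_eq_mul, Finset.mul_sum]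

lemma ptraceM_sum {T D ι : Type*} [Fintype D] (s : Finset ι)
    (f : ι → Matrix (T × D) (T × D) ℂ) :
    ptraceM (∑ α ∈ s, f α) = ∑ α ∈ s, ptraceM (f α) := by
  funext t t'
  show ∑ x : D, (∑ α ∈ s, f α) (t, x) (t', x) = (∑ α ∈ s, ptraceM (f α)) t t'
  simp only [Matrix.sum_apply, ptraceM]
  exact Finset.sum_comm

lemma psd_trace_zero {D : Type*} [Fintype D] [DecidableEq D]
    {A : Matrix D D ℂ} (hA : A.PosSemidef) (h : A.trace = 0) : A = 0 := by
  exact hA.trace_eq_zero_iff.mp h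


/-- Let `Φ : M_d → M_s ⊗ M_d` be a CPTP map and `σ` a full-rank density matrix which is
block diagonal, `σ = Σ_α Pj_α σ Pj_α`, for orthogonal projections `Pj_α` summing to `1`,
and suppose `Φ` preserves the block structure:
`Φ(Pj_α X Pj_α) ∈ M_s ⊗ Pj_α M_d Pj_α`.  Then the generated state decomposes as a convex
sum over the blocks: `tr_M(Φⁿ(σ)) = Σ_α λ_α tr_M(Φⁿ(σ_α))` for every `n ≥ 1`, where
`λ_α = tr(Pj_α σ Pj_α)` and `σ_α = Pj_α σ Pj_α / λ_α`. -/
theorem fcs_decomposes_into_ergodic_components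
    {S D ι : Type*} [Fintype S] [Fintype D] [Fintype ι]
    [DecidableEq S] [DecidableEq D]
    (Φ : Matrix D D ℂ →ₗ[ℂ] Matrix (S × D) (S × D) ℂ)
    (hTP : ∀ X : Matrix D D ℂ, (Φ X).trace = X.trace)
    (hCP : ∀ (n : ℕ) (X : Matrix (Fin n × D) (Fin n × D) ℂ),
      X.PosSemidef → (idTensorGen (⇑Φ) X).PosSemidef)
    (Pj : ι → Matrix D D ℂ)
    (hherm : ∀ α, (Pj α)ᴴ = Pj α)
    (hidem : ∀ α, Pj α * Pj α = Pj α)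
    (horth : ∀ α β, α ≠ β → Pj α * Pj β = 0)
    (hone : ∑ α, Pj α = 1)
    (σ : Matrix D D ℂ) (hσ : σ.PosDef) (hσtr : σ.trace = 1)
    (hblock : σ = ∑ α, Pj α * σ * Pj α)
    (hinv : ∀ (α : ι) (X : Matrix D D ℂ),
      ((1 : Matrix S S ℂ) ⊗ₖ Pj α) * Φ (Pj α * X * Pj α) * ((1 : Matrix S S ℂ) ⊗ₖ Pj α) =
        Φ (Pj α * X * Pj α)) :
    ∀ n : ℕ, 1 ≤ n →
      ptraceM (phiIter (⇑Φ) n σ) =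
        ∑ α, ((Pj α * σ * Pj α).trace) •
          ptraceM (phiIter (⇑Φ) n (((Pj α * σ * Pj α).trace)⁻¹ • (Pj α * σ * Pj α))) := by
  intro n hn
  have hzero : phiIter (⇑Φ) n (0 : Matrix D D ℂ) = 0 := by
    simpa using phiIter_smul Φ n 0 0
  have key : ∀ α, ((Pj α * σ * Pj α).trace) •
      phiIter (⇑Φ) n (((Pj α * σ * Pj α).trace)⁻¹ • (Pj α * σ * Pj α))
      = phiIter (⇑Φ) n (Pj α * σ * Pj α) := by
    intro α
    by_cases h0 : (Pj α * σ * Pj α).trace = 0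
    · have hpsd : (Pj α * σ * Pj α).PosSemidef := by
        have := hσ.posSemidef.conjTranspose_mul_mul_same (Pj α)
        rwa [hherm α] at this
      have hz : Pj α * σ * Pj α = 0 := psd_trace_zero hpsd h0
      simp [hz, hzero]
    · rw [phiIter_smul, smul_smul, mul_inv_cancel₀ h0, one_smul]
  calc ptraceM (phiIter (⇑Φ) n σ)
      = ptraceM (phiIter (⇑Φ) n (∑ α, Pj α * σ * Pj α)) := by rw [← hblock]
    _ = ∑ α, ptraceM (phiIter (⇑Φ) n (Pj α * σ * Pj α)) := by
        rw [phiIter_sum, ptraceM_sum]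
    _ = ∑ α, ((Pj α * σ * Pj α).trace) •
          ptraceM (phiIter (⇑Φ) n (((Pj α * σ * Pj α).trace)⁻¹ • (Pj α * σ * Pj α))) := by
        refine Finset.sum_congr rfl fun α _ => ?_
        rw [← key α, ptraceM_smul]
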